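/- Let f : ℝ → ℝ be real analytic with f(0) = 0 and f'(0) = -1, and suppose f ∘ f is not the identity in any neighborhood of 0. If f(f(x)) - x = c·x^m + O(x^{m+1}) near 0 with c ≠ 0, then m is odd. -/

import Mathlib

open Topology Filter Asymptotics

theorem stmt1 (f : ℝ → ℝ) (hf : AnalyticAt ℝ f 0) (h0 : f 0 = 0)
    (h1 : deriv f 0 = -1)
    (hni : ¬ ∀ᶠ x in 𝓝 (0 : ℝ), f (f x) = x)
    (m : ℕ) (hm : 3 ≤ m) (c : ℝ) (hc : c ≠ 0)
    (hexp : (fun x => f (f x) - x - c * x ^ m) =O[𝓝 (0 : ℝ)] fun x => x ^ (m + 1)) :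
    Odd m := by
  set h : ℝ → ℝ := fun x => f (f x) - x with hh
  -- strict derivative of f at 0 is -1
  obtain ⟨p, hp⟩ := hf
  have hs' := hp.hasStrictDerivAt
  have hderiv : (p 1 fun _ => 1) = -1 := by
    rw [← hs'.hasDerivAt.deriv, h1]
  rw [hderiv] at hs'
  -- Step A : h x / x^m → c on punctured nbhd
  have hA : Tendsto (fun x => h x / x ^ m) (𝓝[≠] (0:ℝ)) (𝓝 c) := by
    have hO : (fun x => (h x - c * x ^ m) * (x ^ m)⁻¹) =O[𝓝[≠] (0:ℝ)]
        (fun x => x ^ (m+1) * (x ^ m)⁻¹) :=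
      (hexp.mono nhdsWithin_le_nhds).mul (isBigO_refl (fun x => (x ^ m)⁻¹) _)
    have hrhs : Tendsto (fun x : ℝ => x ^ (m+1) * (x ^ m)⁻¹) (𝓝[≠] (0:ℝ)) (𝓝 0) := by
      have : Tendsto (fun x : ℝ => x) (𝓝[≠] (0:ℝ)) (𝓝 0) :=
        tendsto_id.mono_left nhdsWithin_le_nhds
      refine this.congr' ?_
      filter_upwards [self_mem_nhdsWithin] with x hx
      have hx0 : x ≠ 0 := hx
      field_simp [pow_succ]
      ring
    have h0' : Tendsto (fun x => (h x - c * x ^ m) * (x ^ m)⁻¹) (𝓝[≠] (0:ℝ)) (𝓝 0) :=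
      hO.trans_tendsto hrhs
    have := h0'.add_const c
    rw [zero_add] at this
    refine this.congr' ?_
    filter_upwards [self_mem_nhdsWithin] with x hx
    have hx0 : (x : ℝ) ^ m ≠ 0 := pow_ne_zero _ hx
    field_simp
    ring
  -- Step C : f x / x → -1
  have hC : Tendsto (fun x => f x / x) (𝓝[≠] (0:ℝ)) (𝓝 (-1)) := by
    have := hasDerivAt_iff_tendsto_slope.mp hs'.hasDerivAt
    refine this.congr' ?_
    filter_upwards [self_mem_nhdsWithin] with x hx
    simp [slope_def_field, h0, div_eq_div_iff]
  -- f x ≠ 0 eventually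
  have hfne : ∀ᶠ x in 𝓝[≠] (0:ℝ), f x ≠ 0 := by
    filter_upwards [hC.eventually_ne (by norm_num : (-1 : ℝ) ≠ 0),
      self_mem_nhdsWithin] with x hx hx0
    intro hfx; exact hx (by simp [hfx])
  -- f tends to punctured nbhd
  have hE : Tendsto f (𝓝[≠] (0:ℝ)) (𝓝[≠] (0:ℝ)) := by
    rw [tendsto_nhdsWithin_iff]
    constructor
    · have := hp.continuousAt.tendsto
      rw [h0] at this
      exact this.mono_left nhdsWithin_le_nhds
    · exact hfne
  -- limit 1 : h (f x) / x^m → c * (-1)^m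
  have hL1 : Tendsto (fun x => h (f x) / x ^ m) (𝓝[≠] (0:ℝ)) (𝓝 (c * (-1) ^ m)) := by
    have hcomp : Tendsto (fun x => h (f x) / (f x) ^ m) (𝓝[≠] (0:ℝ)) (𝓝 c) := hA.comp hE
    have hpow : Tendsto (fun x => (f x / x) ^ m) (𝓝[≠] (0:ℝ)) (𝓝 ((-1) ^ m)) := hC.pow m
    have := hcomp.mul hpow
    refine this.congr' ?_
    filter_upwards [hfne, self_mem_nhdsWithin] with x hfx hx
    have hx0 : (x : ℝ) ≠ 0 := hx
    field_simp [div_pow]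
    rw [div_pow, mul_assoc, div_mul_cancel₀ _ (pow_ne_zero m hx0)]
  -- h x ≠ 0 eventually, h x → 0
  have hhne : ∀ᶠ x in 𝓝[≠] (0:ℝ), h x ≠ 0 := by
    filter_upwards [hA.eventually_ne hc] with x hx
    intro hhx; exact hx (by simp [hhx])
  have hh0 : Tendsto h (𝓝[≠] (0:ℝ)) (𝓝 0) := by
    have hxm : Tendsto (fun x : ℝ => x ^ m) (𝓝[≠] (0:ℝ)) (𝓝 0) := by
      have : Tendsto (fun x : ℝ => x ^ m) (𝓝 (0:ℝ)) (𝓝 (0 ^ m)) :=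
        (continuous_pow m).tendsto 0
      rw [zero_pow (by omega : m ≠ 0)] at this
      exact this.mono_left nhdsWithin_le_nhds
    have := hA.mul hxm
    rw [mul_zero] at this
    refine this.congr' ?_
    filter_upwards [self_mem_nhdsWithin] with x hx
    have hx0 : (x : ℝ) ^ m ≠ 0 := pow_ne_zero _ hx
    field_simp
  -- difference quotient : (f (x + h x) - f x) / h x → -1
  have hDQ : Tendsto (fun x => (f (x + h x) - f x) / h x) (𝓝[≠] (0:ℝ)) (𝓝 (-1)) := by
    have hpair : Tendsto (fun x => ((x + h x, x) : ℝ × ℝ)) (𝓝[≠] (0:ℝ)) (𝓝 ((0:ℝ), (0:ℝ))) := by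
      rw [Prod.tendsto_iff]
      constructor
      · have := (tendsto_id.mono_left (nhdsWithin_le_nhds :
          𝓝[≠] (0:ℝ) ≤ 𝓝 0)).add hh0
        simpa using this
      · exact tendsto_id.mono_left nhdsWithin_le_nhds
    have hlo : (fun p : ℝ × ℝ => f p.1 - f p.2 - (p.1 - p.2) • (-1 : ℝ))
        =o[𝓝 ((0:ℝ), (0:ℝ))] fun p : ℝ × ℝ => p.1 - p.2 := by
      have := hs'.isLittleO
      simpa using this
    have hcomp := hlo.comp_tendsto hpair
    have hdiv := hcomp.tendsto_div_nhds_zero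
    have : Tendsto (fun x => (f (x + h x) - f x - (x + h x - x) * (-1)) / (x + h x - x) + (-1))
        (𝓝[≠] (0:ℝ)) (𝓝 (-1)) := by
      have := hdiv.add_const (-1)
      rw [zero_add] at this
      simpa [Function.comp, smul_eq_mul] using this
    refine this.congr' ?_
    filter_upwards [hhne] with x hx
    have : x + h x - x = h x := by ring
    rw [this]
    field_simp
    ring
  -- limit 2 : h (f x) / x^m → -c
  have hL2 : Tendsto (fun x => h (f x) / x ^ m) (𝓝[≠] (0:ℝ)) (𝓝 (-c)) := by
    have := hDQ.mul hA
    rw [neg_one_mul] at this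
    refine this.congr' ?_
    filter_upwards [hhne] with x hx
    have key : h (f x) = f (x + h x) - f x := by
      have : x + h x = f (f x) := by simp [hh]
      rw [this]
    rw [key]
    field_simp
  -- conclude
  have heq : c * (-1) ^ m = -c := tendsto_nhds_unique hL1 hL2
  have hpow : ((-1 : ℝ)) ^ m = -1 := by
    have h2 : c * (-1 : ℝ) ^ m = c * (-1) := by rw [heq]; ring
    exact mul_left_cancel₀ hc h2
  rcases Nat.even_or_odd m with he | ho
  · exfalso
    rw [he.neg_one_pow] at hpow
    norm_num at hpow
  · exact ho
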